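/- Suppose the definition of an R-mec holds for a class C of finite L-structures for all formulas φ(x, y̅) with a single object variable x. Then C is an R′-mec in L for all formulas φ(x̅, y̅) with tuples x̅ of object variables, where R′ is the closure of R under pointwise addition and multiplication (Projection Lemma). In particular, if Γ is the partition for φ(x₁,…,x_{n−1}; x_n, y̅) with measuring functions f_i, and for each i the formula γ_i(x_n, y̅) defining the i-th class has partition π_{i1},…,π_{ir_i} with measuring functions g_{ij}, then on the common refinement π_{(j_1,…,j_k)} = ⋂_i π_{ij_i} the function h(M) = Σ_i f_i(M)·g_{ij_i}(M) satisfies h(M) = |φ(M^n, b̅)| for all (M, b̅) in that class. -/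

import Mathlib

open FirstOrder Language

/-- A bundled structure for the language `L` (a member of a class of structures). -/
structure BStruc (L : FirstOrder.Language) where
  carrier : Type
  [str : L.Structure carrier]

attribute [instance] BStruc.str

/-- The closure of a set `S` of `ℕ`-valued functions under pointwise addition and
multiplication. -/
inductive GenRing {α : Type*} (S : Set (α → ℕ)) : (α → ℕ) → Prop
  | base {f} : f ∈ S → GenRing S f
  | add {f g} : GenRing S f → GenRing S g → GenRing S (f + g)
  | mul {f g} : GenRing S f → GenRing S g → GenRing S (f * g)

lemma genRing_sum_univ {α ι : Type*} [Fintype ι] [Nonempty ι] {S : Set (α → ℕ)}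
    (f : ι → α → ℕ) (hf : ∀ i, GenRing S (f i)) : GenRing S (∑ i, f i) := by
  have hne : (Finset.univ : Finset ι).Nonempty := Finset.univ_nonempty
  refine Finset.Nonempty.cons_induction (motive := fun s _ => GenRing S (∑ i ∈ s, f i)) ?_ ?_ hne
  · intro a; simpa using hf a
  · intro a s ha hs ih; rw [Finset.sum_cons]; exact GenRing.add (hf a) ih

lemma natCard_sigma' {β : Type*} [Fintype β] (γ : β → Type*) [∀ b, Finite (γ b)] :
    Nat.card (Σ b, γ b) = ∑ b, Nat.card (γ b) := by
  letI : ∀ b, Fintype (γ b) := fun b => Fintype.ofFinite _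
  rw [Nat.card_eq_fintype_card, Fintype.card_sigma]
  simp [Nat.card_eq_fintype_card]

set_option maxHeartbeats 1000000 in
private lemma stmt18_step {L : FirstOrder.Language} (C : Set (BStruc L))
    (R : Set (BStruc L → ℕ)) (hC : ∀ M ∈ C, Finite M.carrier)
    (hbase : ∀ (m : ℕ) (φ : L.Formula (Fin 1 ⊕ Fin m)),
      ∃ (ι : Type) (_ : Finite ι) (ψ : ι → L.Formula (Fin m))
        (h : ι → BStruc L → ℕ),
        (∀ i, h i ∈ R) ∧
        ∀ M ∈ C, ∀ a : Fin m → M.carrier,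
          (∃! i, (ψ i).Realize a) ∧
          ∀ i, (ψ i).Realize a →
            Nat.card {c : Fin 1 → M.carrier | φ.Realize (Sum.elim c a)} = h i M)
    {n : ℕ}
    (IH : ∀ (m : ℕ) (φ : L.Formula (Fin (n + 1) ⊕ Fin m)),
      ∃ (ι : Type) (_ : Finite ι) (ψ : ι → L.Formula (Fin m))
        (h : ι → BStruc L → ℕ),
        (∀ i, GenRing R (h i)) ∧
        ∀ M ∈ C, ∀ a : Fin m → M.carrier,
          (∃! i, (ψ i).Realize a) ∧
          ∀ i, (ψ i).Realize a →
            Nat.card {c : Fin (n + 1) → M.carrier | φ.Realize (Sum.elim c a)} = h i M)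
    {m : ℕ} (φ : L.Formula (Fin (n + 1 + 1) ⊕ Fin m)) :
      ∃ (ι : Type) (_ : Finite ι) (ψ : ι → L.Formula (Fin m))
        (h : ι → BStruc L → ℕ),
        (∀ i, GenRing R (h i)) ∧
        ∀ M ∈ C, ∀ a : Fin m → M.carrier,
          (∃! i, (ψ i).Realize a) ∧
          ∀ i, (ψ i).Realize a →
            Nat.card {c : Fin (n + 1 + 1) → M.carrier | φ.Realize (Sum.elim c a)} =
              h i M := by
  classical
-- relabel: last object variable becomes extra parameter (index 0 of Fin (m+1))
set r : Fin (n + 1 + 1) ⊕ Fin m → Fin (n + 1) ⊕ Fin (m + 1) :=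
  Sum.elim (fun k => Fin.lastCases (Sum.inr 0) (fun k' => Sum.inl k') k)
    (fun j => Sum.inr j.succ) with hr
set φ' : L.Formula (Fin (n + 1) ⊕ Fin (m + 1)) := φ.relabel r with hφ'
obtain ⟨ι, ifin, ψ, h, hGen, hpart⟩ := IH (m + 1) φ'
haveI : Finite ι := ifin
have key : ∀ (M : BStruc L) (a : Fin m → M.carrier) (b : M.carrier)
    (c' : Fin (n + 1) → M.carrier),
    φ'.Realize (Sum.elim c' (Fin.cases b a)) ↔
      φ.Realize (Sum.elim (Fin.snoc c' b) a) := by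
  intro M a b c'
  rw [hφ', Formula.realize_relabel]
  have : (Sum.elim c' (Fin.cases b a)) ∘ r = Sum.elim (Fin.snoc c' b) a := by
    funext x
    rcases x with k | j
    · refine Fin.lastCases ?_ (fun k' => ?_) k <;>
        simp [hr, Fin.snoc_last, Fin.snoc_castSucc]
    · simp [hr]
  rw [this]
rcases isEmpty_or_nonempty ι with hι | hι
· -- degenerate case: every structure in C must be empty
  obtain ⟨ι₀, i0fin, ψ₀, h₀, hR₀, hp₀⟩ := hbase m (⊥ : L.Formula (Fin 1 ⊕ Fin m))
  refine ⟨ι₀, i0fin, ψ₀, h₀, fun i => .base (hR₀ i), fun M hM a => ?_⟩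
  obtain ⟨hex, hcnt⟩ := hp₀ M hM a
  refine ⟨hex, fun i hi => ?_⟩
  have hMe : IsEmpty M.carrier := by
    by_contra hne
    rw [not_isEmpty_iff] at hne
    obtain ⟨x⟩ := hne
    obtain ⟨i', -⟩ := (hpart M hM fun _ => x).1
    exact hι.false i'
  have h1 : Nat.card {c : Fin 1 → M.carrier |
      (⊥ : L.Formula (Fin 1 ⊕ Fin m)).Realize (Sum.elim c a)} = h₀ i M := hcnt i hi
  haveI : IsEmpty {c : Fin 1 → M.carrier |
      (⊥ : L.Formula (Fin 1 ⊕ Fin m)).Realize (Sum.elim c a)} :=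
    ⟨fun c => hMe.false (c.1 0)⟩
  haveI : IsEmpty {c : Fin (n + 1 + 1) → M.carrier | φ.Realize (Sum.elim c a)} :=
    ⟨fun c => hMe.false (c.1 0)⟩
  rw [← h1, Nat.card_of_isEmpty, Nat.card_of_isEmpty]
· -- main case
  choose κ κfin π g hgR hpg using fun i : ι =>
    hbase m ((ψ i).relabel (Fin.cases (Sum.inl 0) Sum.inr : Fin (m + 1) → Fin 1 ⊕ Fin m))
  haveI : ∀ i, Finite (κ i) := κfin
  haveI := Fintype.ofFinite ι
  refine ⟨∀ i, κ i, inferInstance,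
    fun j => BoundedFormula.iInf (fun i => π i (j i)),
    fun j => ∑ i, h i * g i (j i),
    fun j => genRing_sum_univ _ (fun i => GenRing.mul (hGen i) (.base (hgR i (j i)))),
    fun M hM a => ?_⟩
  haveI : Finite M.carrier := hC M hM
  haveI := Fintype.ofFinite M.carrier
  have hreal : ∀ (j : ∀ i, κ i),
      Formula.Realize (BoundedFormula.iInf fun i => π i (j i)) a ↔
        ∀ i, (π i (j i)).Realize a := by
    intro j
    exact BoundedFormula.realize_iInf
  have huniq : ∀ i, ∃! ji : κ i, (π i ji).Realize a := fun i => (hpg i M hM a).1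
  constructor
  · refine ⟨fun i => (huniq i).choose, (hreal _).2 fun i => (huniq i).choose_spec.1,
      fun j' hj' => ?_⟩
    funext i
    exact (huniq i).choose_spec.2 (j' i) ((hreal j').1 hj' i)
  · intro j hj
    have hjre : ∀ i, (π i (j i)).Realize a := (hreal j).1 hj
    -- unique index for each b
    have hbp : ∀ b : M.carrier, ∃! i : ι, (ψ i).Realize (Fin.cases b a) :=
      fun b => (hpart M hM (Fin.cases b a)).1
    set ib : M.carrier → ι := fun b => (hbp b).choose with hib
    have hibre : ∀ b, (ψ (ib b)).Realize (Fin.cases b a) := fun b => (hbp b).choose_spec.1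
    have hibun : ∀ b i, (ψ i).Realize (Fin.cases b a) → i = ib b :=
      fun b i hi => (hbp b).choose_spec.2 i hi
    -- the fibering equivalence
    have hF : Function.Bijective
        (fun p : Σ b : M.carrier, {c' : Fin (n + 1) → M.carrier //
            φ'.Realize (Sum.elim c' (Fin.cases b a))} =>
          (⟨Fin.snoc p.2.1 p.1, (key M a p.1 p.2.1).1 p.2.2⟩ :
            {c : Fin (n + 1 + 1) → M.carrier // φ.Realize (Sum.elim c a)})) := by
      constructor
      · rintro ⟨b1, c1, hc1⟩ ⟨b2, c2, hc2⟩ hpq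
        have hv : (Fin.snoc c1 b1 : Fin (n + 1 + 1) → M.carrier) = Fin.snoc c2 b2 := by
          simpa using congrArg Subtype.val hpq
        have hb : b1 = b2 := by
          have := congrFun hv (Fin.last (n + 1))
          simpa [Fin.snoc_last] using this
        subst hb
        have hc : c1 = c2 := by
          funext k
          have := congrFun hv (Fin.castSucc k)
          simpa [Fin.snoc_castSucc] using this
        subst hc
        rfl
      · rintro ⟨c, hc⟩
        refine ⟨⟨c (Fin.last (n + 1)), ⟨Fin.init c, ?_⟩⟩, ?_⟩
        · rw [key, Fin.snoc_init_self]; exact hc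
        · exact Subtype.ext (Fin.snoc_init_self c)
    have E : {c : Fin (n + 1 + 1) → M.carrier // φ.Realize (Sum.elim c a)} ≃
        Σ b : M.carrier,
          {c' : Fin (n + 1) → M.carrier // φ'.Realize (Sum.elim c' (Fin.cases b a))} :=
      (Equiv.ofBijective _ hF).symm
    have hcard : Nat.card {c : Fin (n + 1 + 1) → M.carrier | φ.Realize (Sum.elim c a)} =
        ∑ b : M.carrier, Nat.card
          {c' : Fin (n + 1) → M.carrier | φ'.Realize (Sum.elim c' (Fin.cases b a))} := by
      have h1 := Nat.card_congr E
      have h2 := natCard_sigma' (fun b : M.carrier =>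
        {c' : Fin (n + 1) → M.carrier // φ'.Realize (Sum.elim c' (Fin.cases b a))})
      exact h1.trans h2
    -- each fiber has size h (ib b) M
    have hfib : ∀ b : M.carrier,
        Nat.card {c' : Fin (n + 1) → M.carrier |
          φ'.Realize (Sum.elim c' (Fin.cases b a))} = h (ib b) M :=
      fun b => (hpart M hM (Fin.cases b a)).2 (ib b) (hibre b)
    -- count of b's in class i is g i (j i) M
    have hfiber_count : ∀ i : ι,
        (Finset.univ.filter fun b : M.carrier => i = ib b).card = g i (j i) M := by
      intro i
      have h2 := (hpg i M hM a).2 (j i) (hjre i)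
      have hs : ∀ c : Fin 1 → M.carrier,
          ((ψ i).relabel (Fin.cases (Sum.inl 0) Sum.inr :
            Fin (m + 1) → Fin 1 ⊕ Fin m)).Realize (Sum.elim c a) ↔
            (ψ i).Realize (Fin.cases (c 0) a) := by
        intro c
        rw [Formula.realize_relabel]
        have : (Sum.elim c a) ∘ (Fin.cases (Sum.inl 0) Sum.inr :
            Fin (m + 1) → Fin 1 ⊕ Fin m) = Fin.cases (c 0) a := by
          funext x
          refine Fin.cases ?_ (fun x' => ?_) x <;> simp
        rw [this]
      rw [← h2]
      have e2 : {c : Fin 1 → M.carrier |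
          ((ψ i).relabel (Fin.cases (Sum.inl 0) Sum.inr :
            Fin (m + 1) → Fin 1 ⊕ Fin m)).Realize (Sum.elim c a)} ≃
          {b : M.carrier | (ψ i).Realize (Fin.cases b a)} :=
        (Equiv.funUnique (Fin 1) M.carrier).subtypeEquiv fun c => by
          rw [Set.mem_setOf_eq, Set.mem_setOf_eq, hs c]
          have : c 0 = c default := congrArg c (Subsingleton.elim _ _)
          rw [this]
          rfl
      rw [Nat.card_congr e2, Nat.card_eq_fintype_card, Fintype.card_subtype]
      congr 1
      apply Finset.filter_congr
      intro b _
      constructor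
      · rintro rfl; exact hibre b
      · exact fun hb => hibun b i hb
    rw [hcard]
    calc ∑ b : M.carrier, Nat.card {c' : Fin (n + 1) → M.carrier |
            φ'.Realize (Sum.elim c' (Fin.cases b a))}
        = ∑ b : M.carrier, h (ib b) M := by
          exact Finset.sum_congr rfl fun b _ => hfib b
      _ = ∑ b : M.carrier, ∑ i : ι, if i = ib b then h i M else 0 := by
          refine Finset.sum_congr rfl fun b _ => ?_
          rw [Finset.sum_ite_eq' Finset.univ (ib b) (fun i => h i M)]
          simp
      _ = ∑ i : ι, ∑ b : M.carrier, if i = ib b then h i M else 0 := Finset.sum_comm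
      _ = ∑ i : ι, h i M * g i (j i) M := by
          refine Finset.sum_congr rfl fun i _ => ?_
          rw [Finset.sum_ite, Finset.sum_const, Finset.sum_const_zero, add_zero,
            smul_eq_mul, hfiber_count i, mul_comm]
      _ = (∑ i, h i * g i (j i)) M := by
          rw [Finset.sum_apply]
          simp [Pi.mul_apply]


/-- Projection Lemma.  Suppose the definition of an `R`-mec holds for a class `C` of
finite `L`-structures for all formulas `φ(x, y̅)` with a single object variable: each
admits a finite definable partition of pointed structures with exact measuring
functions from `R`.  Then the same holds for every formula `φ(x̅, y̅)` with a nonempty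
tuple of object variables, with measuring functions from the closure `R'` of `R` under
pointwise addition and multiplication. -/
theorem stmt_18 {L : FirstOrder.Language} (C : Set (BStruc L))
    (R : Set (BStruc L → ℕ)) (hC : ∀ M ∈ C, Finite M.carrier)
    (hbase : ∀ (m : ℕ) (φ : L.Formula (Fin 1 ⊕ Fin m)),
      ∃ (ι : Type) (_ : Finite ι) (ψ : ι → L.Formula (Fin m))
        (h : ι → BStruc L → ℕ),
        (∀ i, h i ∈ R) ∧
        ∀ M ∈ C, ∀ a : Fin m → M.carrier,
          (∃! i, (ψ i).Realize a) ∧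
          ∀ i, (ψ i).Realize a →
            Nat.card {c : Fin 1 → M.carrier | φ.Realize (Sum.elim c a)} = h i M) :
    ∀ (n m : ℕ) (φ : L.Formula (Fin (n + 1) ⊕ Fin m)),
      ∃ (ι : Type) (_ : Finite ι) (ψ : ι → L.Formula (Fin m))
        (h : ι → BStruc L → ℕ),
        (∀ i, GenRing R (h i)) ∧
        ∀ M ∈ C, ∀ a : Fin m → M.carrier,
          (∃! i, (ψ i).Realize a) ∧
          ∀ i, (ψ i).Realize a →
            Nat.card {c : Fin (n + 1) → M.carrier | φ.Realize (Sum.elim c a)} =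
              h i M := by
  classical
  intro n
  induction n with
  | zero =>
    intro m φ
    obtain ⟨ι, ifin, ψ, h, hR, hp⟩ := hbase m φ
    exact ⟨ι, ifin, ψ, h, fun i => .base (hR i), hp⟩
  | succ n IH =>
    intro m φ
    exact stmt18_step C R hC hbase IH φ
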